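/- For positive integers n and k, the set { x in the algebraic closure of GF(2) : T_k(x) ∈ GF(2^n) } equals the image of GF(2^{2L}) under the map x ↦ T_n^L(T_k^L(T_2(x))), where L = lcm(n, k). In particular this set is contained in GF(2^{2L}). -/

import Mathlib

/-- `T l k x = ∑_{i=0}^{k/l - 1} x^(2^(l*i))`, the linearized trace-like polynomial. -/
noncomputable def T {F : Type*} [Field F] (l k : ℕ) (x : F) : F :=
  ∑ i ∈ Finset.range (k / l), x ^ (2 ^ (l * i))

section Helpers

variable {F : Type*} [Field F] [CharP F 2]

lemma T_pow (l m e : ℕ) (x : F) : (T l m x) ^ (2 ^ e) = T l m (x ^ (2 ^ e)) := by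
  unfold T
  rw [sum_pow_char_pow]
  exact Finset.sum_congr rfl fun i _ => pow_right_comm x _ _

lemma T_add (l m : ℕ) (x y : F) : T l m (x + y) = T l m x + T l m y := by
  unfold T
  rw [← Finset.sum_add_distrib]
  exact Finset.sum_congr rfl fun i _ => add_pow_char_pow x y 2 (l * i)

lemma T_sum (l m : ℕ) {ι : Type*} (s : Finset ι) (f : ι → F) :
    T l m (∑ i ∈ s, f i) = ∑ i ∈ s, T l m (f i) := by
  unfold T
  simp only [sum_pow_char_pow]
  exact Finset.sum_comm

lemma T_comm (a b c d : ℕ) (x : F) : T a b (T c d x) = T c d (T a b x) := by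
  have h1 : T c d x = ∑ j ∈ Finset.range (d / c), x ^ 2 ^ (c * j) := rfl
  have h2 : T c d (T a b x) = ∑ j ∈ Finset.range (d / c), (T a b x) ^ 2 ^ (c * j) := rfl
  rw [h1, T_sum, h2]
  exact Finset.sum_congr rfl fun j _ => (T_pow a b (c * j) x).symm

lemma tele (m q : ℕ) (w : F) :
    (∑ i ∈ Finset.range q, w ^ (2 ^ (m * i))) ^ (2 ^ m)
      = (∑ i ∈ Finset.range q, w ^ (2 ^ (m * i))) + w ^ (2 ^ (m * q)) + w := by
  have h2F : (2 : F) = 0 := CharTwo.two_eq_zero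
  rw [sum_pow_char_pow]
  have key : ∀ i, (w ^ 2 ^ (m * i)) ^ (2 ^ m) = w ^ 2 ^ (m * (i + 1)) := fun i => by
    rw [← pow_mul, ← pow_add, Nat.mul_add, Nat.mul_one]
  simp only [key]
  have h3 := Finset.sum_range_succ (fun i => w ^ 2 ^ (m * i)) q
  have h4 := Finset.sum_range_succ' (fun i => w ^ 2 ^ (m * i)) q
  simp only [Nat.mul_zero, pow_zero, pow_one] at h3 h4
  linear_combination h3 - h4 - w * h2F

lemma T_tele (m M : ℕ) (hdvd : m ∣ M) (w : F) :
    (T m M w) ^ (2 ^ m) = T m M w + w ^ (2 ^ M) + w := by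
  have h := tele m (M / m) w
  rw [Nat.mul_div_cancel' hdvd] at h
  exact h

lemma T_comp (k L : ℕ) (hk : 0 < k) (hdvd : k ∣ L) (z : F) :
    T 1 k (T k L z) = T 1 L z := by
  have hmain : ∑ p ∈ Finset.range k ×ˢ Finset.range (L / k), z ^ (2 ^ (p.1 + k * p.2))
      = ∑ m ∈ Finset.range L, z ^ (2 ^ m) := by
    apply Finset.sum_nbij' (fun p => p.1 + k * p.2) (fun m => (m % k, m / k))
    · intro p hp
      simp only [Finset.mem_product, Finset.mem_range] at hp ⊢
      obtain ⟨h1, h2⟩ := hp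
      calc p.1 + k * p.2 < k + k * p.2 := by omega
        _ = k * (p.2 + 1) := by ring
        _ ≤ k * (L / k) := Nat.mul_le_mul_left k (by omega)
        _ = L := Nat.mul_div_cancel' hdvd
    · intro m hm
      simp only [Finset.mem_product, Finset.mem_range] at hm ⊢
      exact ⟨Nat.mod_lt _ hk, Nat.div_lt_div_of_lt_of_dvd hdvd hm⟩
    · intro p hp
      simp only [Finset.mem_product, Finset.mem_range] at hp
      exact Prod.ext (by simp [Nat.add_mul_mod_self_left, Nat.mod_eq_of_lt hp.1])
        (by simp [Nat.add_mul_div_left _ _ hk, Nat.div_eq_of_lt hp.1])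
    · intro m hm
      simp [Nat.mod_add_div]
    · intro p hp
      rfl
  have l1 : T 1 k (T k L z)
      = ∑ p ∈ Finset.range k ×ˢ Finset.range (L / k), z ^ (2 ^ (p.1 + k * p.2)) := by
    rw [Finset.sum_product]
    show ∑ i ∈ Finset.range (k / 1), (T k L z) ^ 2 ^ (1 * i) = _
    rw [Nat.div_one]
    refine Finset.sum_congr rfl fun i _ => ?_
    show (∑ j ∈ Finset.range (L / k), z ^ 2 ^ (k * j)) ^ 2 ^ (1 * i) = _
    rw [sum_pow_char_pow]
    refine Finset.sum_congr rfl fun j _ => ?_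
    rw [← pow_mul, ← pow_add]
    congr 1
    ring
  have l2 : T 1 L z = ∑ m ∈ Finset.range L, z ^ (2 ^ m) := by
    show ∑ m ∈ Finset.range (L / 1), z ^ 2 ^ (1 * m) = _
    simp [Nat.div_one]
  rw [l1, hmain, l2]

lemma frob_dvd {x : F} {a b : ℕ} (h : x ^ (2 ^ a) = x) (hdvd : a ∣ b) : x ^ (2 ^ b) = x := by
  obtain ⟨c, rfl⟩ := hdvd
  induction c with
  | zero => simp
  | succ c ih =>
    calc x ^ 2 ^ (a * (c + 1)) = (x ^ 2 ^ (a * c)) ^ (2 ^ a) := by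
          rw [← pow_mul, ← pow_add, Nat.mul_succ]
      _ = x := by rw [ih, h]

lemma f_pow (n k L e : ℕ) (y : F) :
    (T n L (T k L (y + y ^ 2))) ^ (2 ^ e)
      = T n L (T k L (y ^ (2 ^ e) + (y ^ (2 ^ e)) ^ 2)) := by
  rw [T_pow n L e, T_pow k L e, add_pow_char_pow, pow_right_comm]

lemma master (n k : ℕ) (hn : 0 < n) (hk : 0 < k) (y : F) :
    (T 1 k (T n (Nat.lcm n k) (T k (Nat.lcm n k) (y + y ^ 2)))) ^ (2 ^ n)
        + T 1 k (T n (Nat.lcm n k) (T k (Nat.lcm n k) (y + y ^ 2)))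
      = y ^ (2 ^ (2 * Nat.lcm n k)) + y := by
  set L := Nat.lcm n k with hL
  have hnL : n ∣ L := Nat.dvd_lcm_left n k
  have hkL : k ∣ L := Nat.dvd_lcm_right n k
  have h2F : (2 : F) = 0 := CharTwo.two_eq_zero
  set z := y + y ^ 2 with hz
  have hA : T 1 k (T n L (T k L z)) = T n L (T 1 L z) := by
    rw [T_comm 1 k n L, T_comp k L hk hkL]
  rw [hA]
  set W := T 1 L z with hW
  set u := y ^ (2 ^ L) + y with hu
  have t1 : (T n L W) ^ (2 ^ n) = T n L W + W ^ (2 ^ L) + W := T_tele n L hnL W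
  have t2 : W ^ (2 ^ L) = T 1 L (z ^ (2 ^ L)) := T_pow 1 L L z
  have t3 : T 1 L (z ^ (2 ^ L)) + T 1 L z = T 1 L (z ^ (2 ^ L) + z) := (T_add 1 L _ _).symm
  have t4 : z ^ (2 ^ L) + z = u + u ^ 2 := by
    have hzl : z ^ (2 ^ L) = y ^ (2 ^ L) + (y ^ (2 ^ L)) ^ 2 := by
      rw [hz, add_pow_char_pow, pow_right_comm]
    rw [hu]
    linear_combination hzl + hz - (y ^ (2 ^ L) * y) * h2F
  have t5 : T 1 L (u + u ^ 2) = u ^ (2 ^ L) + u := by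
    have e1 : T 1 L (u + u ^ 2) = T 1 L u + (T 1 L u) ^ 2 := by
      rw [T_add]
      congr 1
      have := T_pow 1 L 1 u
      norm_num at this
      exact this.symm
    have e2 : (T 1 L u) ^ 2 = T 1 L u + u ^ (2 ^ L) + u := by
      have := T_tele 1 L (one_dvd L) u
      norm_num at this
      exact this
    rw [e1, e2]
    linear_combination (T 1 L u) * h2F
  have t6 : u ^ (2 ^ L) + u = y ^ (2 ^ (2 * L)) + y := by
    have hul : u ^ (2 ^ L) = y ^ (2 ^ (2 * L)) + y ^ (2 ^ L) := by
      rw [hu, add_pow_char_pow, ← pow_mul, ← pow_add, two_mul]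
    rw [hul, hu]
    linear_combination (y ^ (2 ^ L)) * h2F
  calc (T n L W) ^ (2 ^ n) + T n L W
      = (T n L W + W ^ (2 ^ L) + W) + T n L W := by rw [t1]
    _ = W ^ (2 ^ L) + W := by linear_combination (T n L W) * h2F
    _ = T 1 L (z ^ (2 ^ L) + z) := by rw [t2]; exact t3
    _ = T 1 L (u + u ^ 2) := by rw [t4]
    _ = u ^ (2 ^ L) + u := t5
    _ = y ^ (2 ^ (2 * L)) + y := t6

end Helpers

section Surj

variable {F : Type*} [Field F] [CharP F 2] [IsAlgClosed F]

lemma T_surj (m M : ℕ) (hq : 0 < M / m) : Function.Surjective (T m M : F → F) := by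
  intro c
  have hm : 0 < m := by
    rcases Nat.eq_zero_or_pos m with h | h
    · simp [h] at hq
    · exact h
  obtain ⟨q, hq'⟩ : ∃ q', M / m = q' + 1 := ⟨M / m - 1, by omega⟩
  set P : Polynomial F := Polynomial.X ^ (2 ^ (m * q))
      + ((∑ j ∈ Finset.range q, Polynomial.X ^ (2 ^ (m * j))) - Polynomial.C c) with hP
  have hdeg : P.degree = (2 ^ (m * q) : ℕ) := by
    rw [hP]
    rw [Polynomial.degree_add_eq_left_of_degree_lt, Polynomial.degree_X_pow]
    rw [Polynomial.degree_X_pow]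
    apply lt_of_le_of_lt (Polynomial.degree_sub_le _ _)
    rw [max_lt_iff]
    constructor
    · apply lt_of_le_of_lt (Polynomial.degree_sum_le _ _)
      rw [Finset.sup_lt_iff (by exact_mod_cast WithBot.bot_lt_coe _)]
      intro j hj
      rw [Polynomial.degree_X_pow]
      exact_mod_cast Nat.pow_lt_pow_right (by norm_num)
        ((Nat.mul_lt_mul_left hm).mpr (Finset.mem_range.mp hj))
    · exact lt_of_le_of_lt Polynomial.degree_C_le
        (by exact_mod_cast Nat.two_pow_pos _)
  have hne : P.degree ≠ 0 := by
    rw [hdeg]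
    exact_mod_cast (Nat.two_pow_pos (m * q)).ne'
  obtain ⟨zr, hz⟩ := IsAlgClosed.exists_root P hne
  refine ⟨zr, ?_⟩
  have heval : zr ^ (2 ^ (m * q)) + ((∑ j ∈ Finset.range q, zr ^ (2 ^ (m * j))) - c) = 0 := by
    have := hz
    simp only [hP, Polynomial.IsRoot, Polynomial.eval_add, Polynomial.eval_sub,
      Polynomial.eval_pow, Polynomial.eval_X, Polynomial.eval_C,
      Polynomial.eval_finset_sum] at this
    exact this
  have hT : T m M zr = ∑ j ∈ Finset.range (q + 1), zr ^ (2 ^ (m * j)) := by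
    rw [show T m M zr = ∑ j ∈ Finset.range (M / m), zr ^ (2 ^ (m * j)) from rfl, hq']
  rw [hT, Finset.sum_range_succ]
  linear_combination heval

lemma add_sq_surj : ∀ c : F, ∃ y : F, y + y ^ 2 = c := by
  intro c
  set P : Polynomial F := Polynomial.X ^ 2 + (Polynomial.X - Polynomial.C c) with hP
  have hdeg : P.degree = 2 := by
    rw [hP, Polynomial.degree_add_eq_left_of_degree_lt]
    · exact_mod_cast Polynomial.degree_X_pow 2
    · rw [Polynomial.degree_X_pow]
      apply lt_of_le_of_lt (Polynomial.degree_sub_le _ _)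
      rw [max_lt_iff]
      exact ⟨by rw [Polynomial.degree_X]; exact_mod_cast one_lt_two,
        lt_of_le_of_lt Polynomial.degree_C_le (by exact_mod_cast two_pos)⟩
  have hne : P.degree ≠ 0 := by rw [hdeg]; norm_num
  obtain ⟨y, hy⟩ := IsAlgClosed.exists_root P hne
  refine ⟨y, ?_⟩
  have : y ^ 2 + (y - c) = 0 := by
    simpa [hP, Polynomial.IsRoot] using hy
  linear_combination this

end Surj

theorem stmt_9 (n k : ℕ) (hn : 0 < n) (hk : 0 < k) :
    {x : AlgebraicClosure (ZMod 2) | (T 1 k x) ^ (2 ^ n) = T 1 k x} =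
      (fun x : AlgebraicClosure (ZMod 2) =>
          T n (Nat.lcm n k) (T k (Nat.lcm n k) (x + x ^ 2))) ''
        {x : AlgebraicClosure (ZMod 2) | x ^ (2 ^ (2 * Nat.lcm n k)) = x} ∧
    {x : AlgebraicClosure (ZMod 2) | (T 1 k x) ^ (2 ^ n) = T 1 k x} ⊆
      {x : AlgebraicClosure (ZMod 2) | x ^ (2 ^ (2 * Nat.lcm n k)) = x} := by
  set F := AlgebraicClosure (ZMod 2) with hF
  have hLpos : 0 < Nat.lcm n k := Nat.pos_of_ne_zero (Nat.lcm_ne_zero hn.ne' hk.ne')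
  have hnL : n ∣ Nat.lcm n k := Nat.dvd_lcm_left n k
  have hkL : k ∣ Nat.lcm n k := Nat.dvd_lcm_right n k
  have hsurj : ∀ x : F, ∃ y : F, T n (Nat.lcm n k) (T k (Nat.lcm n k) (y + y ^ 2)) = x := by
    intro x
    obtain ⟨a, ha⟩ := T_surj n (Nat.lcm n k) (Nat.div_pos (Nat.le_of_dvd hLpos hnL) hn) x
    obtain ⟨b, hb⟩ := T_surj k (Nat.lcm n k) (Nat.div_pos (Nat.le_of_dvd hLpos hkL) hk) a
    obtain ⟨y, hy⟩ := add_sq_surj b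
    exact ⟨y, by rw [hy, hb, ha]⟩
  constructor
  · ext x
    simp only [Set.mem_setOf_eq, Set.mem_image]
    constructor
    · intro hx
      obtain ⟨y, hy⟩ := hsurj x
      refine ⟨y, ?_, hy⟩
      have hm := master n k hn hk y
      rw [hy, hx, CharTwo.add_self_eq_zero] at hm
      have hm' := hm.symm
      rwa [add_eq_zero_iff_eq_neg, CharTwo.neg_eq] at hm'
    · rintro ⟨y, hy, rfl⟩
      have hm := master n k hn hk y
      rw [hy, CharTwo.add_self_eq_zero] at hm
      rwa [add_eq_zero_iff_eq_neg, CharTwo.neg_eq] at hm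
  · intro x hx
    simp only [Set.mem_setOf_eq] at hx ⊢
    obtain ⟨y, hy⟩ := hsurj x
    have hm := master n k hn hk y
    rw [hy, hx, CharTwo.add_self_eq_zero] at hm
    have hyy : y ^ (2 ^ (2 * Nat.lcm n k)) = y := by
      have hm' := hm.symm
      rwa [add_eq_zero_iff_eq_neg, CharTwo.neg_eq] at hm'
    rw [← hy, f_pow, hyy]
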